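/- Assume L ⊆ Σ^ω is recognized by some deterministic co-Büchi automaton. For every pair (u,v) of finite words: θ(u,v) is a singleton if and only if (u,v) is pointed. -/

import Mathlib

open Classical

/-- Rank of a transition in a co-Büchi automaton: `one` or `two`. -/
inductive Rk | one | two
deriving DecidableEq

/-- A co-Büchi automaton over alphabet `A` with state type `Q`:
initial states and a transition relation where each transition carries a rank. -/
structure CoBuchi (A : Type) (Q : Type) where
  init : Set Q
  delta : Set (Q × A × Rk × Q)

namespace CoBuchi

variable {A Q : Type}

/-- Every state has an outgoing transition on every letter. -/
def Total (M : CoBuchi A Q) : Prop :=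
  ∀ q a, ∃ r q', (q, a, r, q') ∈ M.delta

/-- The prefix `α[0..n-1]` of an infinite word. -/
def prefW (α : ℕ → A) (n : ℕ) : List A := (List.range n).map α

/-- The infinite word `a·w`. -/
def consW (a : A) (w : ℕ → A) : ℕ → A := fun n => match n with
  | 0 => a
  | Nat.succ k => w k

/-- `L(M,q)`: infinite words having a run from `q` with only finitely many rank-1
transitions. -/
def LangFrom (M : CoBuchi A Q) (q : Q) : Set (ℕ → A) :=
  { w | ∃ (ρ : ℕ → Q) (r : ℕ → Rk), ρ 0 = q ∧
        (∀ n, (ρ n, w n, r n, ρ (n + 1)) ∈ M.delta) ∧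
        ∃ N, ∀ n, N ≤ n → r n = Rk.two }

/-- `L(M)`: the language of the automaton. -/
def Lang (M : CoBuchi A Q) : Set (ℕ → A) :=
  { w | ∃ q ∈ M.init, w ∈ M.LangFrom q }

/-- `q →₂^w q'`: a finite run from `q` to `q'` on `w` using only rank-2 transitions. -/
def SafeReach (M : CoBuchi A Q) : Q → List A → Q → Prop
  | q, [], q' => q = q'
  | q, a :: w, q' => ∃ p, (q, a, Rk.two, p) ∈ M.delta ∧ SafeReach M p w q'

/-- A finite run from `q` to `q'` on `w` using transitions of any rank. -/
def Reach (M : CoBuchi A Q) : Q → List A → Q → Prop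
  | q, [], q' => q = q'
  | q, a :: w, q' => ∃ r p, (q, a, r, p) ∈ M.delta ∧ Reach M p w q'

/-- Safe language of a state. -/
def Lsf (M : CoBuchi A Q) (q : Q) : Set (List A) := { w | ∃ q', M.SafeReach q w q' }

/-- Semantically-deterministic: every transition respects residuals. -/
def SemDet (M : CoBuchi A Q) : Prop :=
  ∀ p a rk q, (p, a, rk, q) ∈ M.delta →
    M.LangFrom q = { w | consW a w ∈ M.LangFrom p }

/-- Unsafe-saturated: all residual-respecting rank-1 transitions are present. -/
def UnsafeSat (M : CoBuchi A Q) : Prop :=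
  ∀ p a q, M.LangFrom q = { w | consW a w ∈ M.LangFrom p } →
    (p, a, Rk.one, q) ∈ M.delta

/-- Safe-deterministic: at most one rank-2 transition per state and letter. -/
def SafeDet (M : CoBuchi A Q) : Prop :=
  ∀ p a q q', (p, a, Rk.two, q) ∈ M.delta → (p, a, Rk.two, q') ∈ M.delta → q = q'

/-- Normalized: every rank-2 transition can be completed to a rank-2 loop. -/
def Normalized (M : CoBuchi A Q) : Prop :=
  ∀ q a q', (q, a, Rk.two, q') ∈ M.delta → ∃ x, M.SafeReach q' x q

/-- Deterministic: one initial state, exactly one transition per state and letter. -/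
def Deterministic (M : CoBuchi A Q) : Prop :=
  (∃! q, q ∈ M.init) ∧ ∀ p a, ∃! t : Rk × Q, (p, a, t.1, t.2) ∈ M.delta

/-- History-deterministic: a strategy `σ : Σ* → Q` resolving the nondeterminism,
whose run on every `α ∈ L(M)` can be ranked with finitely many rank-1 transitions. -/
def HistoryDet (M : CoBuchi A Q) : Prop :=
  ∃ σ : List A → Q, σ [] ∈ M.init ∧
    (∀ w a, ∃ rk, (σ w, a, rk, σ (w ++ [a])) ∈ M.delta) ∧
    ∀ α ∈ M.Lang, ∃ r : ℕ → Rk,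
      (∀ n, (σ (prefW α n), α n, r n, σ (prefW α (n + 1))) ∈ M.delta) ∧
      ∃ N, ∀ n, N ≤ n → r n = Rk.two

/-- `q` and `q'` are in the same safe SCC (mutually reachable via rank-2 runs). -/
def SameSafeSCC (M : CoBuchi A Q) (q q' : Q) : Prop :=
  (∃ x, M.SafeReach q x q') ∧ (∃ y, M.SafeReach q' y q)

end CoBuchi

section LangDefs

variable {A : Type} [Nonempty A]

/-- The infinite word `u·w`. -/
def appW (u : List A) (w : ℕ → A) : ℕ → A :=
  fun n => if h : n < u.length then u.get ⟨n, h⟩ else w (n - u.length)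

/-- The infinite word `v^ω` (arbitrary if `v = ε`). -/
noncomputable def iterW (v : List A) : ℕ → A :=
  fun n =>
    if h : v = [] then Classical.arbitrary A
    else v.get ⟨n % v.length, Nat.mod_lt _ (List.length_pos_iff.mpr h)⟩

/-- The ultimately periodic word `u v^ω`. -/
noncomputable def upW (u v : List A) : ℕ → A := appW u (iterW v)

/-- The right congruence `u ∼_L v`. -/
def SimL (L : Set (ℕ → A)) (u v : List A) : Prop :=
  ∀ w : ℕ → A, appW u w ∈ L ↔ appW v w ∈ L

/-- `(u,v) ≈_L ⊥`: `v ≠ ε` and `u(vx)^ω ∉ L` for all `x` with `uvx ∼_L u`. -/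
def ApproxBot (L : Set (ℕ → A)) (u v : List A) : Prop :=
  v ≠ [] ∧ ∀ x : List A, SimL L (u ++ v ++ x) u → upW u (v ++ x) ∉ L

/-- The safe language of a pair: `sfl(u,v) = {x | (u,vx) not ≈_L ⊥}`. -/
def Sfl (L : Set (ℕ → A)) (u v : List A) : Set (List A) :=
  { x | ¬ ApproxBot L u (v ++ x) }

/-- `(u,v) ≡_L (u',v')`. -/
def EquivL (L : Set (ℕ → A)) (u v u' v' : List A) : Prop :=
  SimL L (u ++ v) (u' ++ v') ∧ Sfl L u v = Sfl L u' v'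

/-- `(u,v)` is pointed. -/
def IsPointed (L : Set (ℕ → A)) (u v : List A) : Prop :=
  ¬ ApproxBot L u v ∧
    ∀ u₁ u₂ : List A, SimL L (u₁ ++ u₂) u → ¬ ApproxBot L u₁ (u₂ ++ v) →
      Sfl L u v = Sfl L u₁ (u₂ ++ v)

/-- `(u,v) ≈_L (u',v')` (for pairs with nonempty second components). -/
def ApproxL (L : Set (ℕ → A)) (u v u' v' : List A) : Prop :=
  SimL L u u' ∧ SimL L (u ++ v) (u' ++ v') ∧
    ∀ x : List A, SimL L (u ++ v ++ x) u →
      (upW u (v ++ x) ∈ L ↔ upW u' (v' ++ x) ∈ L)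

/-- `L` is recognized by some (total) deterministic co-Büchi automaton. -/
def DCWRecognizable (L : Set (ℕ → A)) : Prop :=
  ∃ (Q : Type) (_ : Fintype Q) (M : CoBuchi A Q), M.Deterministic ∧ M.Lang = L

/-- IsPointed pairs. -/
def PointedPair (L : Set (ℕ → A)) : Type :=
  { p : List A × List A // IsPointed L p.1 p.2 }

/-- `≡_L` as a setoid on all pairs. -/
def equivLSetoid (L : Set (ℕ → A)) : Setoid (List A × List A) where
  r p q := EquivL L p.1 p.2 q.1 q.2
  iseqv := {
    refl := fun p => ⟨fun w => Iff.rfl, rfl⟩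
    symm := fun h => ⟨fun w => (h.1 w).symm, h.2.symm⟩
    trans := fun h g => ⟨fun w => (h.1 w).trans (g.1 w), h.2.trans g.2⟩ }

/-- `≡_L` as a setoid on pointed pairs. -/
def canonSetoid (L : Set (ℕ → A)) : Setoid (PointedPair L) where
  r p q := EquivL L p.1.1 p.1.2 q.1.1 q.1.2
  iseqv := {
    refl := fun p => ⟨fun w => Iff.rfl, rfl⟩
    symm := fun h => ⟨fun w => (h.1 w).symm, h.2.symm⟩
    trans := fun h g => ⟨fun w => (h.1 w).trans (g.1 w), h.2.trans g.2⟩ }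

/-- States of the canonical automaton: `≡_L`-classes of pointed pairs. -/
def CanonState (L : Set (ℕ → A)) : Type := Quotient (canonSetoid L)

/-- The class `⟦u,v⟧` of a pointed pair. -/
def cls (L : Set (ℕ → A)) (u v : List A) (h : IsPointed L u v) : CanonState L :=
  Quotient.mk (canonSetoid L) ⟨(u, v), h⟩

/-- The canonical automaton `A_{≡_L}`. -/
def canonAut (L : Set (ℕ → A)) : CoBuchi A (CanonState L) where
  init := { s | ∃ (u v : List A) (h : IsPointed L u v),
              s = cls L u v h ∧ SimL L (u ++ v) [] }
  delta := { t |
    (∃ (u v : List A) (h : IsPointed L u v) (h' : IsPointed L u (v ++ [t.2.1])),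
        ¬ ApproxBot L u (v ++ [t.2.1]) ∧
        t.1 = cls L u v h ∧ t.2.2.1 = Rk.two ∧
        t.2.2.2 = cls L u (v ++ [t.2.1]) h') ∨
    (∃ (u v u' v' : List A) (h : IsPointed L u v) (h' : IsPointed L u' v'),
        SimL L (u ++ v ++ [t.2.1]) (u' ++ v') ∧
        t.1 = cls L u v h ∧ t.2.2.1 = Rk.one ∧ t.2.2.2 = cls L u' v' h') }

/-- `θ(u,v)`: states of `A_{≡_L}` reachable by reading `u` from an initial state
(any ranks) and then `v` via rank-2 transitions only. -/
def theta (L : Set (ℕ → A)) (u v : List A) : Set (CanonState L) :=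
  { q | ∃ p₀ ∈ (canonAut L).init, ∃ p,
          (canonAut L).Reach p₀ u p ∧ (canonAut L).SafeReach p v q }

/-- `(u,v)` is supported: `θ(u,v) ≠ ∅`. -/
def Supported (L : Set (ℕ → A)) (u v : List A) : Prop := (theta L u v).Nonempty

/-- `(u,v)` is double-supported: two distinct states of `θ(u,v)` in the same safe SCC. -/
def DoubleSupported (L : Set (ℕ → A)) (u v : List A) : Prop :=
  ∃ q ∈ theta L u v, ∃ q' ∈ theta L u v, q ≠ q' ∧ (canonAut L).SameSafeSCC q q'

/-- `(u,v)` is single-supported. -/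
def SingleSupported (L : Set (ℕ → A)) (u v : List A) : Prop :=
  Supported L u v ∧ ¬ DoubleSupported L u v

/-- `w` concatenated with itself `m` times. -/
def repCat (w : List A) : ℕ → List A
  | 0 => []
  | Nat.succ m => w ++ repCat w m

end LangDefs
set_option linter.unusedSectionVars false
set_option linter.unusedVariables false
section Aux1
variable {A : Type} [Nonempty A]

theorem gE {l l' : List A} {i j : ℕ} (hi : i < l.length) (hj : j < l'.length)
    (h : l[i]? = l'[j]?) : l[i]'hi = l'[j]'hj := by
  rw [List.getElem?_eq_getElem hi, List.getElem?_eq_getElem hj] at h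
  exact Option.some.inj h

theorem appW_nil (w : ℕ → A) : appW ([] : List A) w = w := by
  funext n; simp [appW]

theorem appW_lt {u : List A} {w : ℕ → A} {n : ℕ} (h : n < u.length) :
    appW u w n = u[n] := by
  simp [appW, h]

theorem appW_ge {u : List A} {w : ℕ → A} {n : ℕ} (h : u.length ≤ n) :
    appW u w n = w (n - u.length) := by
  simp [appW, Nat.not_lt_of_ge h]

theorem appW_append (u v : List A) (w : ℕ → A) :
    appW (u ++ v) w = appW u (appW v w) := by
  funext n
  rcases lt_or_ge n u.length with h | h
  · rw [appW_lt (by simp; omega), appW_lt h]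
    exact gE _ _ (by rw [List.getElem?_append, if_pos h])
  · rw [appW_ge h]
    rcases lt_or_ge n (u.length + v.length) with h2 | h2
    · rw [appW_lt (by simp; omega), appW_lt (by omega)]
      exact gE _ _ (by rw [List.getElem?_append, if_neg (by omega)])
    · rw [appW_ge (by simpa using h2), appW_ge (by omega)]
      congr 1; simp; omega

theorem iterW_get {v : List A} (hv : v ≠ []) (n : ℕ) :
    iterW v n = v[n % v.length]'(Nat.mod_lt _ (List.length_pos_iff.mpr hv)) := by
  simp [iterW, hv]

theorem iterW_rot {a b : List A} (h : a ++ b ≠ []) :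
    appW a (iterW (b ++ a)) = iterW (a ++ b) := by
  have hba : b ++ a ≠ [] := by
    intro hh; apply h; rcases List.append_eq_nil_iff.mp hh with ⟨h1, h2⟩; simp [h1, h2]
  have e1 : (b ++ a).length = b.length + a.length := by simp
  have e2 : (a ++ b).length = a.length + b.length := by simp
  have hl : 0 < a.length + b.length := by
    have := List.length_pos_iff.mpr h; omega
  funext n
  rcases lt_or_ge n a.length with hn | hn
  · rw [appW_lt hn, iterW_get h]
    refine gE _ _ ?_
    have hmm : n % (a ++ b).length = n := Nat.mod_eq_of_lt (by omega)
    rw [hmm, List.getElem?_append, if_pos hn]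
  · rw [appW_ge hn, iterW_get hba, iterW_get h]
    refine gE _ _ ?_
    set m := n - a.length with hm
    set r := m % (b ++ a).length with hr
    have hrlt : r < b.length + a.length := by
      rw [hr, ← e1]; exact Nat.mod_lt _ (by omega)
    have h1 : n % (a ++ b).length = (r + a.length) % (a.length + b.length) := by
      rw [e2]
      have hn' : n = m + a.length := by omega
      rw [hn']
      conv_lhs => rw [show m = (b++a).length * (m / (b++a).length) + r from (Nat.div_add_mod m _).symm]
      rw [e1, Nat.add_assoc, show b.length + a.length = a.length + b.length from Nat.add_comm _ _,
        Nat.mul_add_mod]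
    rw [h1, List.getElem?_append, List.getElem?_append]
    rcases lt_or_ge r b.length with hrb | hrb
    · have h2 : (r + a.length) % (a.length + b.length) = r + a.length :=
        Nat.mod_eq_of_lt (by omega)
      rw [h2, if_pos hrb, if_neg (by omega),
        show r + a.length - a.length = r by omega]
    · have h2 : (r + a.length) % (a.length + b.length) = r - b.length := by
        rw [Nat.mod_eq_sub_mod (by omega),
          show r + a.length - (a.length + b.length) = r - b.length by omega,
          Nat.mod_eq_of_lt (by omega)]
      rw [h2, if_neg (by omega), if_pos (by omega)]

theorem repCat_nil (n : ℕ) : repCat ([] : List A) n = [] := by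
  induction n with
  | zero => rfl
  | succ m ih => simp [repCat, ih]

theorem repCat_length (w : List A) (n : ℕ) : (repCat w n).length = n * w.length := by
  induction n with
  | zero => simp [repCat]
  | succ m ih => simp [repCat, ih]; ring

theorem repCat_add (w : List A) (m n : ℕ) :
    repCat w (m + n) = repCat w m ++ repCat w n := by
  induction m with
  | zero => simp [repCat]
  | succ k ih =>
    have : k + 1 + n = (k + n) + 1 := by omega
    rw [this]
    simp [repCat, ih]

theorem repCat_one (w : List A) : repCat w 1 = w := by simp [repCat]

theorem repCat_getElem {w : List A} (hw : w ≠ []) (n j : ℕ) (hj : j < (repCat w n).length) :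
    (repCat w n)[j] = w[j % w.length]'(Nat.mod_lt _ (List.length_pos_iff.mpr hw)) := by
  induction n generalizing j with
  | zero => simp [repCat] at hj
  | succ m ih =>
    have e3 : (repCat w (m+1)).length = w.length + (repCat w m).length := by
      simp [repCat]
    refine gE _ _ ?_
    show (w ++ repCat w m)[j]? = _
    rw [List.getElem?_append]
    rcases lt_or_ge j w.length with h | h
    · rw [if_pos h]
      congr 1; rw [Nat.mod_eq_of_lt h]
    · rw [if_neg (by omega)]
      have hj' : j - w.length < (repCat w m).length := by omega
      rw [List.getElem?_eq_getElem hj', ih _ hj',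
        List.getElem?_eq_getElem (Nat.mod_lt _ (List.length_pos_iff.mpr hw))]
      congr 2
      conv_rhs => rw [← Nat.sub_add_cancel h, Nat.add_mod_right]

theorem iterW_repCat (w : List A) (k : ℕ) : iterW (repCat w (k + 1)) = iterW w := by
  rcases eq_or_ne w [] with rfl | hw
  · rw [repCat_nil]
  · have hwl : 0 < w.length := List.length_pos_iff.mpr hw
    have hr : repCat w (k + 1) ≠ [] := by
      intro h
      have h2 := repCat_length w (k + 1)
      rw [h] at h2
      rcases Nat.mul_eq_zero.mp h2.symm with h' | h'
      · omega
      · exact hw (List.length_eq_zero_iff.mp h')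
    funext n
    rw [iterW_get hr, iterW_get hw, repCat_getElem hw]
    congr 1
    rw [repCat_length]
    rw [Nat.mod_mod_of_dvd _ ⟨k + 1, by ring⟩]

theorem iterW_block {s : List A} (hs : s ≠ []) (k : ℕ) :
    iterW s = appW (repCat s k) (iterW s) := by
  have hsl : 0 < s.length := List.length_pos_iff.mpr hs
  funext n
  rcases lt_or_ge n (repCat s k).length with h | h
  · rw [appW_lt h, repCat_getElem hs _ _ h, iterW_get hs]
  · rw [appW_ge h, iterW_get hs, iterW_get hs]
    congr 1
    have hK' : k * s.length ≤ n := by rw [← repCat_length s k]; exact h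
    have key : n % s.length = (n - k * s.length) % s.length := by
      conv_lhs => rw [← Nat.sub_add_cancel hK']
      rw [Nat.add_mul_mod_self_right]
    rw [repCat_length, key]

end Aux1
section Aux2
variable {A : Type} [Nonempty A] {L : Set (ℕ → A)}

theorem simL_refl (u : List A) : SimL L u u := fun _ => Iff.rfl
theorem simL_symm {u v : List A} (h : SimL L u v) : SimL L v u := fun w => (h w).symm
theorem simL_trans {u v x : List A} (h : SimL L u v) (h' : SimL L v x) : SimL L u x :=
  fun w => (h w).trans (h' w)

theorem simL_append {u v : List A} (z : List A) (h : SimL L u v) :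
    SimL L (u ++ z) (v ++ z) := by
  intro w
  rw [appW_append, appW_append]
  exact h _

theorem notbot_iff {u s : List A} :
    ¬ ApproxBot L u s ↔ s = [] ∨ ∃ z, SimL L (u ++ s ++ z) u ∧ upW u (s ++ z) ∈ L := by
  constructor
  · intro h
    by_cases hs : s = []
    · exact Or.inl hs
    · right
      rcases not_and_or.mp h with h1 | h2
      · exact absurd (not_not.mp h1) hs
      · push_neg at h2
        exact h2
  · rintro (rfl | ⟨z, h1, h2⟩) hb
    · exact hb.1 rfl
    · exact hb.2 z h1 h2

/-- The prefix-closed language `K(u)` of "safe extensions". -/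
def Kset (L : Set (ℕ → A)) (u : List A) : Set (List A) := {s | ¬ ApproxBot L u s}

theorem K_nil (u : List A) : [] ∈ Kset L u := by
  intro hb; exact hb.1 rfl

theorem K_class {u u' : List A} (h : SimL L u u') : Kset L u = Kset L u' := by
  have main : ∀ a b : List A, SimL L a b → Kset L a ⊆ Kset L b := by
    intro a b hab s hs
    rw [Kset, Set.mem_setOf_eq, notbot_iff] at hs ⊢
    rcases hs with rfl | ⟨z, h1, h2⟩
    · exact Or.inl rfl
    · right
      refine ⟨z, ?_, ?_⟩
      · have h4 := simL_append (s ++ z) hab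
        rw [← List.append_assoc, ← List.append_assoc] at h4
        exact simL_trans (simL_symm h4) (simL_trans h1 hab)
      · exact (hab (iterW (s ++ z))).mp h2
  exact le_antisymm (main _ _ h) (main _ _ (simL_symm h))

theorem K_prefix {u s t : List A} (h : s ++ t ∈ Kset L u) : s ∈ Kset L u := by
  rw [Kset, Set.mem_setOf_eq, notbot_iff] at h ⊢
  rcases h with he | ⟨z, h1, h2⟩
  · rcases List.append_eq_nil_iff.mp he with ⟨rfl, rfl⟩
    exact Or.inl rfl
  · right
    refine ⟨t ++ z, ?_, ?_⟩
    · rw [show u ++ s ++ (t ++ z) = u ++ (s ++ t) ++ z by simp] at *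
      exact h1
    · rw [show s ++ (t ++ z) = (s ++ t) ++ z by simp]
      exact h2

theorem K_prefix' {u s t : List A} (hp : s <+: t) (h : t ∈ Kset L u) : s ∈ Kset L u := by
  rcases hp with ⟨r, rfl⟩
  exact K_prefix h

theorem K_move {u q s : List A} (h : q ++ s ∈ Kset L u) : s ∈ Kset L (u ++ q) := by
  rw [Kset, Set.mem_setOf_eq, notbot_iff] at h ⊢
  rcases h with he | ⟨z, h1, h2⟩
  · rcases List.append_eq_nil_iff.mp he with ⟨rfl, rfl⟩
    exact Or.inl rfl
  · by_cases hq : q ++ (s ++ z) = []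
    · rcases List.append_eq_nil_iff.mp hq with ⟨rfl, h4⟩
      rcases List.append_eq_nil_iff.mp h4 with ⟨rfl, rfl⟩
      exact Or.inl rfl
    right
    refine ⟨z ++ q, ?_, ?_⟩
    · have h4 := simL_append q h1
      have e : u ++ (q ++ s) ++ z ++ q = u ++ q ++ s ++ (z ++ q) := by simp
      rw [e] at h4
      exact h4
    · have key : upW (u ++ q) (s ++ (z ++ q)) = upW u ((q ++ s) ++ z) := by
        show appW (u ++ q) (iterW (s ++ (z ++ q))) = appW u (iterW ((q ++ s) ++ z))
        rw [show s ++ (z ++ q) = (s ++ z) ++ q by simp, appW_append,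
          iterW_rot hq, show q ++ (s ++ z) = (q ++ s) ++ z by simp]
      rw [key]
      have e2 : (q ++ s) ++ z = q ++ s ++ z := by simp
      rw [e2]
      exact h2

theorem simL_pump {u w : List A} (h : SimL L (u ++ w) u) (n : ℕ) :
    SimL L (u ++ repCat w n) u := by
  induction n with
  | zero => simpa [repCat] using simL_refl (L := L) u
  | succ m ih =>
    have h2 : SimL L ((u ++ w) ++ repCat w m) (u ++ repCat w m) := by
      have := simL_append (repCat w m) h
      exact this
    have h3 : repCat w (m + 1) = w ++ repCat w m := rfl
    rw [h3, show u ++ (w ++ repCat w m) = (u ++ w) ++ repCat w m by simp]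
    exact simL_trans h2 ih

theorem K_pump {u w : List A} (h : SimL L (u ++ w) u) (hm : upW u w ∈ L) (n : ℕ) :
    repCat w n ∈ Kset L u := by
  cases n with
  | zero => exact K_nil u
  | succ m =>
    rw [Kset, Set.mem_setOf_eq, notbot_iff]
    right
    refine ⟨[], ?_, ?_⟩
    · rw [List.append_nil]
      exact simL_pump h (m + 1)
    · rw [List.append_nil]
      show appW u (iterW (repCat w (m + 1))) ∈ L
      rw [iterW_repCat]
      exact hm

theorem mem_sfl {u y x : List A} : x ∈ Sfl L u y ↔ (y ++ x) ∈ Kset L u := Iff.rfl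

theorem sfl_nil_mem {x y : List A} : ([] : List A) ∈ Sfl L x y ↔ y ∈ Kset L x := by
  rw [mem_sfl, List.append_nil]

theorem sfl_quot (a b c : List A) : Sfl L a (b ++ c) = {t | c ++ t ∈ Sfl L a b} := by
  ext t
  rw [Set.mem_setOf_eq, mem_sfl, mem_sfl, List.append_assoc]

theorem sfl_move {a b x Y : List A} (h : SimL L (a ++ b) x) :
    Sfl L a (b ++ Y) ⊆ Sfl L x Y := by
  intro t ht
  rw [mem_sfl] at ht ⊢
  rw [show b ++ Y ++ t = b ++ (Y ++ t) by simp] at ht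
  have := K_move ht
  rw [K_class h] at this
  exact this

theorem sfl_prefix {a b t t' : List A} (hp : t' <+: t) (h : t ∈ Sfl L a b) :
    t' ∈ Sfl L a b := by
  rcases hp with ⟨r, rfl⟩
  rw [mem_sfl] at h ⊢
  exact K_prefix' ⟨r, by simp⟩ h

end Aux2
section Aux3
variable {A : Type} [Nonempty A] {L : Set (ℕ → A)}

theorem equivL_refl (u v : List A) : EquivL L u v u v := ⟨simL_refl _, rfl⟩
theorem equivL_symm {u v u' v' : List A} (h : EquivL L u v u' v') : EquivL L u' v' u v :=
  ⟨simL_symm h.1, h.2.symm⟩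
theorem equivL_trans {u v u' v' u'' v'' : List A} (h : EquivL L u v u' v')
    (h' : EquivL L u' v' u'' v'') : EquivL L u v u'' v'' :=
  ⟨simL_trans h.1 h'.1, h.2.trans h'.2⟩

theorem equivL_extend {a b x y : List A} (z : List A) (h : EquivL L a b x y) :
    EquivL L a (b ++ z) x (y ++ z) := by
  constructor
  · have h2 := simL_append z h.1
    rw [List.append_assoc, List.append_assoc] at h2
    exact h2
  · rw [sfl_quot, sfl_quot, h.2]

theorem cls_eq {u v u' v' : List A} {h : IsPointed L u v} {h' : IsPointed L u' v'} :
    cls L u v h = cls L u' v' h' ↔ EquivL L u v u' v' := by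
  constructor
  · intro he
    exact Quotient.exact he
  · intro he
    exact Quotient.sound he

theorem notbot_transfer {x y x' y' : List A} (hs : Sfl L x y = Sfl L x' y')
    (h : y ∈ Kset L x) : y' ∈ Kset L x' := by
  rw [← sfl_nil_mem, ← hs, sfl_nil_mem]
  exact h

theorem pointed_notbot {x y : List A} (h : IsPointed L x y) : y ∈ Kset L x := h.1

theorem reach_append {Q : Type} {M : CoBuchi A Q} {p q r : Q} {u v : List A}
    (h1 : M.Reach p u q) (h2 : M.Reach q v r) : M.Reach p (u ++ v) r := by
  induction u generalizing p with
  | nil =>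
    simp only [CoBuchi.Reach] at h1
    subst h1
    simpa using h2
  | cons a u ih =>
    simp only [CoBuchi.Reach] at h1 ⊢
    obtain ⟨rk, p₁, hm, hr⟩ := h1
    exact ⟨rk, p₁, hm, ih hr⟩

theorem reach_sound :
    ∀ (u : List A) (s p : CanonState L), (canonAut L).Reach s u p →
    ∀ (x y : List A) (h : IsPointed L x y) (w₀ : List A),
      s = cls L x y h → SimL L (x ++ y) w₀ →
    ∃ (x' y' : List A) (h' : IsPointed L x' y'), p = cls L x' y' h' ∧ SimL L (x' ++ y') (w₀ ++ u) := by
  intro u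
  induction u with
  | nil =>
    intro s p hr x y h w₀ hs hsim
    simp only [CoBuchi.Reach] at hr
    subst hr
    exact ⟨x, y, h, hs, by simpa using hsim⟩
  | cons a u ih =>
    intro s p hr x y h w₀ hs hsim
    simp only [CoBuchi.Reach] at hr
    obtain ⟨rk, p₁, hm, hrest⟩ := hr
    simp only [canonAut, Set.mem_setOf_eq] at hm
    rcases hm with ⟨u', v', h1, h2, hnb, hseq, hrk, hp1⟩ | ⟨u', v', u'', v'', h1, h2, hsim2, hseq, hrk, hp1⟩
    · -- rank 2 step : p₁ = cls u' (v' ++ [a])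
      subst hs
      have heq : EquivL L u' v' x y := cls_eq.mp hseq.symm
      have hsim' : SimL L (u' ++ (v' ++ [a])) (w₀ ++ [a]) := by
        have := simL_append [a] (simL_trans heq.1 hsim)
        rw [List.append_assoc] at this
        exact this
      have := ih p₁ p hrest u' (v' ++ [a]) h2 (w₀ ++ [a]) hp1 hsim'
      rw [List.append_assoc] at this
      simpa using this
    · -- rank 1 step : p₁ = cls u'' v''
      subst hs
      have heq : EquivL L u' v' x y := cls_eq.mp hseq.symm
      have hsim' : SimL L (u'' ++ v'') (w₀ ++ [a]) := by
        have e1 : SimL L (u' ++ v' ++ [a]) (w₀ ++ [a]) :=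
          simL_append [a] (simL_trans heq.1 hsim)
        exact simL_trans (simL_symm hsim2) e1
      have := ih p₁ p hrest u'' v'' h2 (w₀ ++ [a]) hp1 hsim'
      rw [List.append_assoc] at this
      simpa using this

theorem safe_sound :
    ∀ (v : List A) (s q : CanonState L), (canonAut L).SafeReach s v q →
    ∀ (x y : List A) (h : IsPointed L x y), s = cls L x y h →
    ∃ (x' y' : List A) (h' : IsPointed L x' y'), q = cls L x' y' h' ∧ EquivL L x' y' x (y ++ v) := by
  intro v
  induction v with
  | nil =>
    intro s q hr x y h hs
    simp only [CoBuchi.SafeReach] at hr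
    subst hr
    exact ⟨x, y, h, hs, by simpa using equivL_refl x y⟩
  | cons c v ih =>
    intro s q hr x y h hs
    simp only [CoBuchi.SafeReach] at hr
    obtain ⟨p₁, hm, hrest⟩ := hr
    simp only [canonAut, Set.mem_setOf_eq] at hm
    rcases hm with ⟨u', v', h1, h2, hnb, hseq, _, hp1⟩ | ⟨u', v', u'', v'', h1, h2, hsim2, hseq, hrk, hp1⟩
    · subst hs
      have heq : EquivL L u' v' x y := cls_eq.mp hseq.symm
      obtain ⟨x', y', h', hq, heq2⟩ := ih p₁ q hrest u' (v' ++ [c]) h2 hp1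
      refine ⟨x', y', h', hq, ?_⟩
      have e1 : EquivL L u' (v' ++ (c :: v)) x (y ++ (c :: v)) := equivL_extend _ heq
      have e2 : v' ++ [c] ++ v = v' ++ (c :: v) := by simp
      rw [e2] at heq2
      exact equivL_trans heq2 e1
    · exact absurd hrk.symm (by simp)

theorem mem_init_iff {s : CanonState L} :
    s ∈ (canonAut L).init ↔ ∃ (u v : List A) (h : IsPointed L u v),
      s = cls L u v h ∧ SimL L (u ++ v) [] := Iff.rfl

theorem reach_constr
    (hEX : ∀ w' : List A, ∃ (x y : List A) (h : IsPointed L x y), SimL L (x ++ y) w') :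
    ∀ (u x y : List A) (h : IsPointed L x y), SimL L (x ++ y) u →
    ∃ p₀ ∈ (canonAut L).init, (canonAut L).Reach p₀ u (cls L x y h) := by
  intro u
  induction u using List.reverseRecOn with
  | nil =>
    intro x y h hsim
    refine ⟨cls L x y h, ⟨x, y, h, rfl, hsim⟩, ?_⟩
    simp only [CoBuchi.Reach]
  | append_singleton u a ih =>
    intro x y h hsim
    obtain ⟨x₁, y₁, h₁, hsim₁⟩ := hEX u
    obtain ⟨p₀, hinit, hreach⟩ := ih x₁ y₁ h₁ hsim₁
    refine ⟨p₀, hinit, ?_⟩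
    refine reach_append hreach ?_
    simp only [CoBuchi.Reach]
    refine ⟨Rk.one, cls L x y h, ?_, rfl⟩
    exact Or.inr ⟨x₁, y₁, x, y, h₁, h,
      simL_trans (simL_append [a] hsim₁) (simL_symm hsim), rfl, rfl, rfl⟩

end Aux3

section Aux3b
variable {A : Type} [Nonempty A] {L : Set (ℕ → A)}

theorem safe_constr
    (hCL : ∀ (x y : List A) (h : IsPointed L x y) (c : A), (y ++ [c]) ∈ Kset L x →
      ∃ (x' y' : List A) (h1 : IsPointed L x' y') (_h2 : IsPointed L x' (y' ++ [c])),
        EquivL L x' y' x y) :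
    ∀ (v x y : List A) (h : IsPointed L x y),
      (∀ p : List A, p <+: v → (y ++ p) ∈ Kset L x) →
    ∃ (x' y' : List A) (h' : IsPointed L x' y'),
      (canonAut L).SafeReach (cls L x y h) v (cls L x' y' h') ∧
      EquivL L x' y' x (y ++ v) := by
  intro v
  induction v with
  | nil =>
    intro x y h hpre
    refine ⟨x, y, h, ?_, by simpa using equivL_refl x y⟩
    show cls L x y h = cls L x y h
    rfl
  | cons c v ih =>
    intro x y h hpre
    obtain ⟨x', y', h1, h2, heq⟩ := hCL x y h c (hpre [c] ⟨v, rfl⟩)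
    have hpre' : ∀ p : List A, p <+: v → ((y' ++ [c]) ++ p) ∈ Kset L x' := by
      intro p hp
      have m1 : ([c] ++ p) ∈ Sfl L x y := by
        rw [mem_sfl]
        refine hpre ([c] ++ p) ?_
        show c :: p <+: c :: v
        simpa using hp
      rw [← heq.2] at m1
      rw [mem_sfl] at m1
      rw [List.append_assoc]
      exact m1
    obtain ⟨x'', y'', h'', hsr, heq2⟩ := ih x' (y' ++ [c]) h2 hpre'
    refine ⟨x'', y'', h'', ?_, ?_⟩
    · show ∃ p₁, ((cls L x y h, c, Rk.two, p₁) ∈ (canonAut L).delta) ∧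
        (canonAut L).SafeReach p₁ v (cls L x'' y'' h'')
      refine ⟨cls L x' (y' ++ [c]) h2, ?_, hsr⟩
      exact Or.inl ⟨x', y', h1, h2, h2.1, cls_eq.mpr (equivL_symm heq), rfl, rfl⟩
    · have e1 := equivL_extend (c :: v) heq
      have e2 : (y' ++ [c]) ++ v = y' ++ (c :: v) := by simp
      rw [e2] at heq2
      exact equivL_trans heq2 e1

end Aux3b
section Aux4
variable {A Q : Type} [Nonempty A]

/-- Deterministic run on a finite word. -/
def dRun (nxt : Q → A → Q) (q : Q) (u : List A) : Q := u.foldl nxt q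

/-- Deterministic run on an infinite word. -/
def rhoRun (nxt : Q → A → Q) (q : Q) (α : ℕ → A) : ℕ → Q
  | 0 => q
  | n + 1 => nxt (rhoRun nxt q α n) (α n)

/-- All transitions while reading `u` from `q` have rank 2. -/
def safeW (nxt : Q → A → Q) (rk : Q → A → Rk) : Q → List A → Prop
  | _, [] => True
  | q, a :: u => rk q a = Rk.two ∧ safeW nxt rk (nxt q a) u

/-- The (unique deterministic) run on `α` from `q` is eventually rank-2. -/
def AccFrom (nxt : Q → A → Q) (rk : Q → A → Rk) (q : Q) (α : ℕ → A) : Prop :=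
  ∃ N, ∀ n, N ≤ n → rk (rhoRun nxt q α n) (α n) = Rk.two

variable {nxt : Q → A → Q} {rk : Q → A → Rk}

theorem dRun_nil (q : Q) : dRun nxt q [] = q := rfl
theorem dRun_cons (q : Q) (a : A) (u : List A) :
    dRun nxt q (a :: u) = dRun nxt (nxt q a) u := rfl
theorem dRun_append (q : Q) (u v : List A) :
    dRun nxt q (u ++ v) = dRun nxt (dRun nxt q u) v := List.foldl_append ..

/-- shift of an infinite word -/
def shiftW (α : ℕ → A) : ℕ → A := fun n => α (n + 1)

theorem rho_shift (q : Q) (α : ℕ → A) (n : ℕ) :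
    rhoRun nxt q α (n + 1) = rhoRun nxt (nxt q (α 0)) (shiftW α) n := by
  induction n with
  | zero => rfl
  | succ m ih =>
    show nxt (rhoRun nxt q α (m + 1)) (α (m + 1)) = _
    rw [ih]
    rfl

theorem appW_cons (a : A) (u : List A) (α : ℕ → A) :
    appW (a :: u) α = CoBuchi.consW a (appW u α) := by
  funext n
  cases n with
  | zero =>
    rw [appW_lt (by simp)]
    rfl
  | succ m =>
    show appW (a :: u) α (m + 1) = appW u α m
    rcases lt_or_ge m u.length with h | h
    · rw [appW_lt (by simpa using Nat.succ_lt_succ h), appW_lt h]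
      simp
    · rw [appW_ge (by simpa using Nat.succ_le_succ h), appW_ge h]
      congr 1
      simp

theorem rho_cons (q : Q) (a : A) (β : ℕ → A) (n : ℕ) :
    rhoRun nxt q (CoBuchi.consW a β) (n + 1) = rhoRun nxt (nxt q a) β n := by
  rw [rho_shift]
  have h0 : CoBuchi.consW a β 0 = a := rfl
  have hs : shiftW (CoBuchi.consW a β) = β := by funext m; rfl
  rw [h0, hs]

theorem rho_app (u : List A) (q : Q) (α : ℕ → A) (n : ℕ) :
    rhoRun nxt q (appW u α) (u.length + n) = rhoRun nxt (dRun nxt q u) α n := by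
  induction u generalizing q with
  | nil =>
    rw [appW_nil, show ([] : List A).length + n = n from by simp]
    rfl
  | cons a u ih =>
    have e : (a :: u).length + n = (u.length + n) + 1 := by simp; omega
    rw [e, appW_cons, rho_cons, ih]
    rfl

theorem appW_shift_letter (u : List A) (α : ℕ → A) (n : ℕ) :
    appW u α (u.length + n) = α n := by
  rw [appW_ge (by omega)]
  congr 1
  omega

theorem AccFrom_app (u : List A) (q : Q) (α : ℕ → A) :
    AccFrom nxt rk q (appW u α) ↔ AccFrom nxt rk (dRun nxt q u) α := by
  constructor
  · rintro ⟨N, hN⟩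
    refine ⟨N, fun n hn => ?_⟩
    have := hN (u.length + n) (by omega)
    rwa [rho_app, appW_shift_letter] at this
  · rintro ⟨N, hN⟩
    refine ⟨u.length + N, fun n hn => ?_⟩
    have e : n = u.length + (n - u.length) := by omega
    rw [e, rho_app, appW_shift_letter]
    exact hN _ (by omega)

theorem safeW_append (q : Q) (u v : List A) :
    safeW nxt rk q (u ++ v) ↔ safeW nxt rk q u ∧ safeW nxt rk (dRun nxt q u) v := by
  induction u generalizing q with
  | nil => simp [safeW, dRun_nil]
  | cons a u ih =>
    show (rk q a = Rk.two ∧ safeW nxt rk (nxt q a) (u ++ v)) ↔ _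
    rw [ih, dRun_cons]
    show _ ↔ ((rk q a = Rk.two ∧ safeW nxt rk (nxt q a) u) ∧ _)
    tauto

theorem safeW_iff_ranks (u : List A) (q : Q) (α : ℕ → A)
    (hα : ∀ i, (h : i < u.length) → α i = u[i]) :
    safeW nxt rk q u ↔ ∀ i < u.length, rk (rhoRun nxt q α i) (α i) = Rk.two := by
  induction u generalizing q α with
  | nil => simp [safeW]
  | cons a u ih =>
    have h0 : α 0 = a := hα 0 (by simp)
    constructor
    · rintro ⟨h1, h2⟩ i hi
      cases i with
      | zero =>
        show rk q (α 0) = Rk.two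
        rw [h0]; exact h1
      | succ m =>
        rw [rho_shift, h0]
        have := (ih (nxt q a) (shiftW α)
          (fun j hj => by show α (j+1) = _; have := hα (j+1) (by simpa using Nat.succ_lt_succ hj); simpa using this)).mp h2
        exact this m (by simpa using hi)
    · intro hr
      refine ⟨by have := hr 0 (by simp); rwa [h0] at this, ?_⟩
      refine (ih (nxt q a) (shiftW α)
        (fun j hj => by show α (j+1) = _; have := hα (j+1) (by simpa using Nat.succ_lt_succ hj); simpa using this)).mpr ?_
      intro i hi
      have := hr (i + 1) (by simpa using Nat.succ_lt_succ hi)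
      rwa [rho_shift, h0] at this

theorem iterW_letter {s : List A} (hs : s ≠ []) (i : ℕ) (h : i < s.length) :
    iterW s i = s[i] := by
  rw [iterW_get hs]
  congr 1
  exact Nat.mod_eq_of_lt h

theorem hloopAcc {s : List A} (hs : s ≠ []) (q : Q) :
    AccFrom nxt rk q (iterW s) ↔
      ∃ k, ∀ m, safeW nxt rk (dRun nxt q (repCat s (k + m))) s := by
  have hsl : 0 < s.length := List.length_pos_iff.mpr hs
  constructor
  · rintro ⟨N, hN⟩
    refine ⟨N, fun m => ?_⟩
    rw [safeW_iff_ranks s _ (iterW s) (fun i h => iterW_letter hs i h)]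
    intro i hi
    have key : ∀ j, rhoRun nxt (dRun nxt q (repCat s (N + m))) (iterW s) j =
        rhoRun nxt q (iterW s) ((repCat s (N + m)).length + j) := by
      intro j
      conv_rhs => rw [iterW_block hs (N + m), rho_app]
    rw [key i]
    have hlet : iterW s ((repCat s (N + m)).length + i) = iterW s i := by
      rw [iterW_get hs, iterW_get hs]
      congr 1
      rw [repCat_length, Nat.add_comm, Nat.add_mul_mod_self_right]
    rw [← hlet]
    refine hN _ ?_
    have : N ≤ (N + m) * s.length := by
      calc N ≤ (N + m) * 1 := by omega
      _ ≤ (N + m) * s.length := Nat.mul_le_mul_left _ hsl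
    rw [repCat_length]
    omega
  · rintro ⟨k, hk⟩
    refine ⟨(k + 1) * s.length, fun n hn => ?_⟩
    set m := n / s.length - k with hm
    set i := n % s.length with hi
    have hdiv : k ≤ n / s.length := by
      have h1 : k + 1 ≤ n / s.length := (Nat.le_div_iff_mul_le hsl).mpr (by omega)
      omega
    have e2 := Nat.div_add_mod n s.length
    have hn' : n = (repCat s (k + m)).length + i := by
      rw [repCat_length]
      have h1 : k + m = n / s.length := by omega
      rw [h1, Nat.mul_comm]
      omega
    have hlet : iterW s n = iterW s i := by
      rw [iterW_get hs, iterW_get hs]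
      congr 1
      rw [hi]
      exact (Nat.mod_mod_of_dvd n (dvd_refl s.length)).symm
    have hilt : i < s.length := Nat.mod_lt _ hsl
    have key : rhoRun nxt q (iterW s) ((repCat s (k + m)).length + i) =
        rhoRun nxt (dRun nxt q (repCat s (k + m))) (iterW s) i := by
      conv_lhs => rw [iterW_block hs (k + m)]
      rw [rho_app]
    rw [hlet, hn', key]
    exact (safeW_iff_ranks s (dRun nxt q (repCat s (k + m))) (iterW s)
      (fun j h => iterW_letter hs j h)).mp (hk m) i hilt

end Aux4
theorem sfl_finite {A : Type} [Nonempty A] {L : Set (ℕ → A)} (hrec : DCWRecognizable L) :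
    Set.Finite {S : Set (List A) | ∃ x y : List A, S = Sfl L x y} := by
  classical
  obtain ⟨Q, instF, M, hdet, hL⟩ := hrec
  haveI := instF
  let T : Q → A → Rk × Q := fun q a => (hdet.2 q a).choose
  let nxt : Q → A → Q := fun q a => (T q a).2
  let rk : Q → A → Rk := fun q a => (T q a).1
  have hTmem : ∀ q a, (q, a, rk q a, nxt q a) ∈ M.delta := fun q a => (hdet.2 q a).choose_spec.1
  have hTuniq : ∀ q a (t : Rk × Q), (q, a, t.1, t.2) ∈ M.delta → t = T q a :=
    fun q a t ht => (hdet.2 q a).choose_spec.2 t ht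
  let q0 : Q := hdet.1.choose
  have hq0 : q0 ∈ M.init := hdet.1.choose_spec.1
  have huq0 : ∀ q ∈ M.init, q = q0 := fun q hq => hdet.1.choose_spec.2 q hq
  have hacc : ∀ α, α ∈ L ↔ AccFrom nxt rk q0 α := by
    intro α
    rw [← hL]
    constructor
    · rintro ⟨q, hqi, ρ', r', h0, hstep, N, hN⟩
      have hqq : q = q0 := huq0 q hqi
      have hρ : ∀ n, ρ' n = rhoRun nxt q0 α n := by
        intro n
        induction n with
        | zero => rw [h0, hqq]; rfl
        | succ m ih =>
          have hs := hstep m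
          rw [ih] at hs
          have h2 := congrArg Prod.snd (hTuniq _ _ (r' m, ρ' (m + 1)) hs)
          exact h2
      refine ⟨N, fun n hn => ?_⟩
      have hs := hstep n
      rw [hρ n] at hs
      have h3 : r' n = rk (rhoRun nxt q0 α n) (α n) :=
        congrArg Prod.fst (hTuniq _ _ (r' n, ρ' (n + 1)) hs)
      rw [← h3]
      exact hN n hn
    · rintro ⟨N, hN⟩
      exact ⟨q0, hq0, rhoRun nxt q0 α, fun n => rk (rhoRun nxt q0 α n) (α n), rfl,
        fun n => hTmem _ _, ⟨N, hN⟩⟩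
  have hres : ∀ (u : List A) (α : ℕ → A),
      appW u α ∈ L ↔ AccFrom nxt rk (dRun nxt q0 u) α := by
    intro u α
    rw [hacc, AccFrom_app]
  have hsimst : ∀ u u', dRun nxt q0 u = dRun nxt q0 u' → SimL L u u' := by
    intro u u' h α
    rw [hres, hres, h]
  have hloop : ∀ (x s : List A), s ≠ [] →
      (upW x s ∈ L ↔ ∃ k, ∀ m, safeW nxt rk (dRun nxt (dRun nxt q0 x) (repCat s (k + m))) s) := by
    intro x s hs
    show appW x (iterW s) ∈ L ↔ _
    rw [hres, hloopAcc hs]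
  let Prof : List A → List A → Q × (Q → Q × Prop) :=
    fun x y => (dRun nxt q0 x, fun p => (dRun nxt p y, safeW nxt rk p y))
  have htrans : ∀ x y x' y', Prof x y = Prof x' y' → Sfl L x y ⊆ Sfl L x' y' := by
    intro x y x' y' hP t ht
    have hq : dRun nxt q0 x = dRun nxt q0 x' := congrArg Prod.fst hP
    have hdp : ∀ p, dRun nxt p y = dRun nxt p y' :=
      fun p => congrArg Prod.fst (congrFun (congrArg Prod.snd hP) p)
    have hsfp : ∀ p, safeW nxt rk p y ↔ safeW nxt rk p y' :=
      fun p => iff_of_eq (congrArg Prod.snd (congrFun (congrArg Prod.snd hP) p))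
    rw [mem_sfl] at ht ⊢
    by_cases ht0 : y ++ t = []
    · obtain ⟨hy, htnil⟩ := List.append_eq_nil_iff.mp ht0
      subst htnil
      rw [List.append_nil]
      by_cases hy' : y' = []
      · rw [hy']; exact K_nil x'
      · subst hy
        have hfix : ∀ p, dRun nxt p y' = p := fun p => (hdp p).symm
        have hsafe : ∀ p, safeW nxt rk p y' := fun p => (hsfp p).mp trivial
        have hrep : ∀ (p : Q) (m : ℕ), dRun nxt p (repCat y' m) = p := by
          intro p m
          induction m with
          | zero => rfl
          | succ j ih =>
            show dRun nxt p (y' ++ repCat y' j) = p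
            rw [dRun_append, hfix]
            exact ih
        rw [Kset, Set.mem_setOf_eq, notbot_iff]
        right
        refine ⟨[], ?_, ?_⟩
        · refine hsimst _ _ ?_
          rw [List.append_nil, dRun_append, hfix]
        · rw [List.append_nil, hloop x' y' hy']
          refine ⟨0, fun m => ?_⟩
          rw [hrep]
          exact hsafe _
    · rcases notbot_iff.mp ht with he | ⟨z, h1, h2⟩
      · exact absurd he ht0
      · by_cases ht0' : y' ++ t = []
        · rw [ht0']; exact K_nil x'
        · rw [Kset, Set.mem_setOf_eq, notbot_iff]
          right
          refine ⟨z, ?_, ?_⟩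
          · have st1 : dRun nxt q0 (x ++ (y ++ t) ++ z) = dRun nxt q0 (x' ++ (y' ++ t) ++ z) := by
              simp only [dRun_append]
              rw [hq, hdp]
            intro α
            have h1α := h1 α
            rw [hres, hres] at h1α
            rw [hres, hres, ← st1, ← hq]
            exact h1α
          · have e1 : (y ++ t) ++ z = y ++ (t ++ z) := by simp
            have e1' : (y' ++ t) ++ z = y' ++ (t ++ z) := by simp
            rw [show y' ++ t ++ z = y' ++ (t ++ z) from e1']
            rw [show y ++ t ++ z = y ++ (t ++ z) from e1] at h2
            set s : List A := y ++ (t ++ z) with hsdef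
            set s' : List A := y' ++ (t ++ z) with hsdef'
            have hs : s ≠ [] := by
              rw [hsdef]
              intro hh
              rcases List.append_eq_nil_iff.mp hh with ⟨hy, htz⟩
              rcases List.append_eq_nil_iff.mp htz with ⟨ht', hz⟩
              exact ht0 (by rw [hy, ht']; rfl)
            have hs' : s' ≠ [] := by
              rw [hsdef']
              intro hh
              rcases List.append_eq_nil_iff.mp hh with ⟨hy, htz⟩
              rcases List.append_eq_nil_iff.mp htz with ⟨ht', hz⟩
              exact ht0' (by rw [hy, ht']; rfl)
            rw [hloop x s hs] at h2
            rw [hloop x' s' hs']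
            obtain ⟨k, hk⟩ := h2
            have hblockst : ∀ p, dRun nxt p s = dRun nxt p s' := by
              intro p
              rw [hsdef, hsdef', dRun_append p y (t ++ z), dRun_append p y' (t ++ z), hdp]
            have hblocksf : ∀ p, (safeW nxt rk p s ↔ safeW nxt rk p s') := by
              intro p
              rw [hsdef, hsdef', safeW_append p y (t ++ z), safeW_append p y' (t ++ z), hdp p]
              exact and_congr (hsfp p) Iff.rfl
            have hstate : ∀ j, dRun nxt (dRun nxt q0 x') (repCat s' j) =
                dRun nxt (dRun nxt q0 x) (repCat s j) := by
              intro j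
              induction j with
              | zero => rw [show repCat s' 0 = ([] : List A) from rfl,
                  show repCat s 0 = ([] : List A) from rfl, dRun_nil, dRun_nil, hq]
              | succ m ih =>
                have r1 : repCat s' (m + 1) = repCat s' m ++ s' := by
                  rw [show m + 1 = m + 1 from rfl, repCat_add s' m 1, repCat_one]
                have r2 : repCat s (m + 1) = repCat s m ++ s := by
                  rw [repCat_add s m 1, repCat_one]
                rw [r1, r2, dRun_append (dRun nxt q0 x') (repCat s' m) s',
                  dRun_append (dRun nxt q0 x) (repCat s m) s, ih, ← hblockst]
            refine ⟨k, fun m => ?_⟩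
            rw [hstate (k + m)]
            exact (hblocksf _).mp (hk m)
  have hval : ∀ x y x' y', Prof x y = Prof x' y' → Sfl L x y = Sfl L x' y' :=
    fun x y x' y' h => le_antisymm (htrans _ _ _ _ h) (htrans _ _ _ _ h.symm)
  let f : Q × (Q → Q × Prop) → Set (List A) := fun d =>
    if h : ∃ x : List A, ∃ y : List A, Prof x y = d then
      Sfl L h.choose h.choose_spec.choose else ∅
  refine Set.Finite.subset (Set.finite_range f) ?_
  rintro S ⟨x, y, rfl⟩
  refine ⟨Prof x y, ?_⟩
  have hex : ∃ x' : List A, ∃ y' : List A, Prof x' y' = Prof x y := ⟨x, y, rfl⟩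
  show (if h : ∃ x'' : List A, ∃ y'' : List A, Prof x'' y'' = Prof x y then
      Sfl L h.choose h.choose_spec.choose else ∅) = Sfl L x y
  rw [dif_pos hex]
  exact hval _ _ _ _ hex.choose_spec.choose_spec
section Aux6
variable {A : Type} [Nonempty A] {L : Set (ℕ → A)}

/-- Measure: number of sfl-values below `G`. -/
noncomputable def msr (L : Set (ℕ → A)) (G : Set (List A)) : ℕ :=
  {S | (∃ x y : List A, S = Sfl L x y) ∧ S ⊆ G}.ncard

theorem msr_lt (hfin : Set.Finite {S : Set (List A) | ∃ x y : List A, S = Sfl L x y})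
    {a b x Y : List A} (hsub : Sfl L a b ⊆ Sfl L x Y) (hne : Sfl L a b ≠ Sfl L x Y) :
    msr L (Sfl L a b) < msr L (Sfl L x Y) := by
  apply Set.ncard_lt_ncard
  · constructor
    · intro S hS
      exact ⟨hS.1, hS.2.trans hsub⟩
    · intro hcon
      have hmem : Sfl L x Y ∈ {S | (∃ x' y' : List A, S = Sfl L x' y') ∧ S ⊆ Sfl L x Y} :=
        ⟨⟨x, Y, rfl⟩, subset_rfl⟩
      have h2 := hcon hmem
      exact hne (le_antisymm hsub h2.2)
  · exact hfin.subset (fun S hS => hS.1)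

theorem descent (hfin : Set.Finite {S : Set (List A) | ∃ x y : List A, S = Sfl L x y}) :
    ∀ (x Y : List A), Y ∈ Kset L x →
    ∃ (x' m : List A), IsPointed L x' (m ++ Y) ∧ SimL L (x' ++ m) x := by
  suffices H : ∀ (N : ℕ) (x Y : List A), msr L (Sfl L x Y) ≤ N → Y ∈ Kset L x →
      ∃ (x' m : List A), IsPointed L x' (m ++ Y) ∧ SimL L (x' ++ m) x by
    intro x Y h
    exact H (msr L (Sfl L x Y)) x Y le_rfl h
  intro N
  induction N using Nat.strong_induction_on with
  | _ N ih =>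
    intro x Y hle hY
    by_cases hp : IsPointed L x Y
    · refine ⟨x, [], ?_, ?_⟩
      · rw [List.nil_append]; exact hp
      · rw [List.append_nil]; exact simL_refl x
    · have hW : ¬ ∀ u₁ u₂ : List A, SimL L (u₁ ++ u₂) x → ¬ ApproxBot L u₁ (u₂ ++ Y) →
          Sfl L x Y = Sfl L u₁ (u₂ ++ Y) := fun hall => hp ⟨hY, hall⟩
      push_neg at hW
      obtain ⟨u₁, u₂, hsim, hnb, hne⟩ := hW
      have hsub : Sfl L u₁ (u₂ ++ Y) ⊆ Sfl L x Y := sfl_move hsim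
      have hlt : msr L (Sfl L u₁ (u₂ ++ Y)) < msr L (Sfl L x Y) :=
        msr_lt hfin hsub (fun hc => hne hc.symm)
      obtain ⟨x', m', hpt, hsim'⟩ :=
        ih (msr L (Sfl L u₁ (u₂ ++ Y))) (by omega) u₁ (u₂ ++ Y) le_rfl hnb
      refine ⟨x', m' ++ u₂, ?_, ?_⟩
      · rw [List.append_assoc]; exact hpt
      · rw [← List.append_assoc]
        exact simL_trans (simL_append u₂ hsim') hsim

theorem exist_pointed (hfin : Set.Finite {S : Set (List A) | ∃ x y : List A, S = Sfl L x y}) :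
    ∀ w : List A, ∃ (x y : List A) (h : IsPointed L x y), SimL L (x ++ y) w := by
  intro w
  obtain ⟨x', m, hpt, hsim⟩ := descent hfin w [] (K_nil w)
  rw [List.append_nil] at hpt
  exact ⟨x', m, hpt, hsim⟩

theorem closure_pointed
    (hfin : Set.Finite {S : Set (List A) | ∃ x y : List A, S = Sfl L x y}) :
    ∀ (x y : List A), IsPointed L x y → ∀ c : A, (y ++ [c]) ∈ Kset L x →
    ∃ (x' y' : List A) (_h1 : IsPointed L x' y') (_h2 : IsPointed L x' (y' ++ [c])),
      EquivL L x' y' x y := by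
  intro x y h c hm
  obtain ⟨x', m, hpt, hsim⟩ := descent hfin x (y ++ [c]) hm
  have h2 : IsPointed L x' ((m ++ y) ++ [c]) := by
    rw [List.append_assoc]; exact hpt
  have hKc : ((m ++ y) ++ [c]) ∈ Kset L x' := h2.1
  have hKm : (m ++ y) ∈ Kset L x' := K_prefix hKc
  have hsfl : Sfl L x y = Sfl L x' (m ++ y) := h.2 x' m hsim hKm
  have h1 : IsPointed L x' (m ++ y) := by
    refine ⟨hKm, ?_⟩
    intro w₁ w₂ hw hnb
    have e1 : SimL L (w₁ ++ (w₂ ++ m)) x := by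
      rw [← List.append_assoc]
      exact simL_trans (simL_append m hw) hsim
    have e2 : ¬ ApproxBot L w₁ ((w₂ ++ m) ++ y) := by
      rw [List.append_assoc]
      exact hnb
    have h3 := h.2 w₁ (w₂ ++ m) e1 e2
    rw [List.append_assoc] at h3
    exact hsfl.symm.trans h3
  refine ⟨x', m ++ y, h1, h2, ?_, hsfl.symm⟩
  rw [← List.append_assoc]
  exact simL_append y hsim

/-- The level-`j` liveness/violation predicate of a witness value `S` against `G`. -/
def PpP {A : Type} (w : List A) (G S : Set (List A)) (j : ℕ) : Prop :=
  repCat w j ∈ S ∧ {t | repCat w j ++ t ∈ S} ≠ {t | repCat w j ++ t ∈ G}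

theorem Pp_down {w : List A} {G S : Set (List A)}
    (hSv : ∃ a b : List A, S = Sfl L a b) {i j : ℕ} (hij : i ≤ j)
    (h : PpP w G S j) : PpP w G S i := by
  have ej : repCat w i ++ repCat w (j - i) = repCat w j := by
    rw [← repCat_add]; congr 1; omega
  constructor
  · obtain ⟨aa, bb, rfl⟩ := hSv
    exact sfl_prefix ⟨repCat w (j - i), ej⟩ h.1
  · intro hEq
    apply h.2
    ext t
    have h1 := Set.ext_iff.mp hEq (repCat w (j - i) ++ t)
    simp only [Set.mem_setOf_eq] at h1 ⊢
    rw [← List.append_assoc, ej] at h1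
    exact h1

end Aux6
section Aux7
variable {A : Type} [Nonempty A] {L : Set (ℕ → A)}

theorem goodrec (hfin : Set.Finite {S : Set (List A) | ∃ x y : List A, S = Sfl L x y})
    (w : List A) :
    ∀ (x Y : List A), (∀ n, (Y ++ repCat w n) ∈ Kset L x) →
    ∃ (x' m : List A) (k : ℕ),
      IsPointed L x' ((m ++ Y) ++ repCat w k) ∧ SimL L (x' ++ m) x ∧
      (∀ n, (((m ++ Y) ++ repCat w k) ++ repCat w n) ∈ Kset L x') := by
  suffices H : ∀ (N : ℕ) (x Y : List A), msr L (Sfl L x Y) ≤ N →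
      (∀ n, (Y ++ repCat w n) ∈ Kset L x) →
      ∃ (x' m : List A) (k : ℕ),
        IsPointed L x' ((m ++ Y) ++ repCat w k) ∧ SimL L (x' ++ m) x ∧
        (∀ n, (((m ++ Y) ++ repCat w k) ++ repCat w n) ∈ Kset L x') by
    intro x Y h
    exact H (msr L (Sfl L x Y)) x Y le_rfl h
  intro N
  induction N using Nat.strong_induction_on with
  | _ N ih =>
    intro x Y hle hGood
    by_cases hP : ∃ k, IsPointed L x (Y ++ repCat w k)
    · obtain ⟨k, hk⟩ := hP
      refine ⟨x, [], k, ?_, ?_, ?_⟩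
      · rw [List.nil_append]; exact hk
      · rw [List.append_nil]; exact simL_refl x
      · intro n
        rw [List.nil_append, List.append_assoc, ← repCat_add]
        exact hGood (k + n)
    · push_neg at hP
      have hW : ∀ k, ∃ aa bb : List A, SimL L (aa ++ bb) x ∧
          ¬ ApproxBot L aa (bb ++ (Y ++ repCat w k)) ∧
          Sfl L x (Y ++ repCat w k) ≠ Sfl L aa (bb ++ (Y ++ repCat w k)) := by
        intro k
        by_contra hc
        push_neg at hc
        exact hP k ⟨hGood k, hc⟩
      choose aw bw hsim hnb hne using hW
      have claim1 : ∀ k, PpP w (Sfl L x Y) (Sfl L (aw k) (bw k ++ Y)) k := by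
        intro k
        constructor
        · rw [mem_sfl, List.append_assoc]
          exact hnb k
        · have e1 : {t | repCat w k ++ t ∈ Sfl L (aw k) (bw k ++ Y)} =
              Sfl L (aw k) ((bw k ++ Y) ++ repCat w k) := (sfl_quot _ _ _).symm
          have e2 : {t | repCat w k ++ t ∈ Sfl L x Y} = Sfl L x (Y ++ repCat w k) :=
            (sfl_quot _ _ _).symm
          rw [e1, e2, List.append_assoc]
          exact fun hc => (hne k) hc.symm
      have claim3 : ∃ k0, ∀ j, PpP w (Sfl L x Y) (Sfl L (aw k0) (bw k0 ++ Y)) j := by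
        by_contra hc
        push_neg at hc
        classical
        let g : Set (List A) → ℕ :=
          fun S => if h : ∃ j, ¬ PpP w (Sfl L x Y) S j then h.choose else 0
        have hgdef : ∀ (S : Set (List A)) (hS : ∃ j, ¬ PpP w (Sfl L x Y) S j),
            ¬ PpP w (Sfl L x Y) S (g S) := by
          intro S hS
          have he : g S = hS.choose := dif_pos hS
          rw [he]
          exact hS.choose_spec
        have hgt : ∀ k, k < g (Sfl L (aw k) (bw k ++ Y)) := by
          intro k
          by_contra hle2
          push_neg at hle2
          exact hgdef _ (hc k) (Pp_down ⟨_, _, rfl⟩ hle2 (claim1 k))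
        obtain ⟨B, hB⟩ := (hfin.image g).bddAbove
        have hmem : g (Sfl L (aw B) (bw B ++ Y)) ∈
            g '' {S : Set (List A) | ∃ x y : List A, S = Sfl L x y} :=
          ⟨_, ⟨aw B, bw B ++ Y, rfl⟩, rfl⟩
        have h1 := hB hmem
        have h2 := hgt B
        omega
      obtain ⟨k0, hk0⟩ := claim3
      have hGood' : ∀ n, ((bw k0 ++ Y) ++ repCat w n) ∈ Kset L (aw k0) := by
        intro n
        rw [← mem_sfl]
        exact (hk0 n).1
      have hsub : Sfl L (aw k0) (bw k0 ++ Y) ⊆ Sfl L x Y := sfl_move (hsim k0)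
      have hne0 : Sfl L (aw k0) (bw k0 ++ Y) ≠ Sfl L x Y := by
        have h0 := (hk0 0).2
        intro hc
        apply h0
        rw [hc]
      have hlt : msr L (Sfl L (aw k0) (bw k0 ++ Y)) < msr L (Sfl L x Y) :=
        msr_lt hfin hsub hne0
      obtain ⟨x', m', k, hpt, hsim', hGood''⟩ :=
        ih (msr L (Sfl L (aw k0) (bw k0 ++ Y))) (by omega) (aw k0) (bw k0 ++ Y) le_rfl hGood'
      refine ⟨x', m' ++ bw k0, k, ?_, ?_, ?_⟩
      · rw [List.append_assoc m' (bw k0) Y]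
        exact hpt
      · rw [← List.append_assoc]
        exact simL_trans (simL_append (bw k0) hsim') (hsim k0)
      · intro n
        rw [List.append_assoc m' (bw k0) Y]
        exact hGood'' n

end Aux7
section Aux8
variable {A : Type} [Nonempty A] {L : Set (ℕ → A)}

theorem LI1 (u₂ v z' : List A) (n : ℕ) :
    (u₂ ++ repCat (v ++ (z' ++ u₂)) n) ++ (v ++ z') = repCat (u₂ ++ (v ++ z')) (n + 1) := by
  induction n with
  | zero => simp [repCat]
  | succ m ih =>
    have e1 : repCat (u₂ ++ (v ++ z')) (m + 2) =
        (u₂ ++ (v ++ z')) ++ repCat (u₂ ++ (v ++ z')) (m + 1) := rfl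
    rw [e1, ← ih]
    show (u₂ ++ ((v ++ (z' ++ u₂)) ++ repCat (v ++ (z' ++ u₂)) m)) ++ (v ++ z') = _
    simp

theorem LI2 (u₂ v z' : List A) (k : ℕ) :
    u₂ ++ repCat (v ++ (z' ++ u₂)) k = repCat (u₂ ++ (v ++ z')) k ++ u₂ := by
  induction k with
  | zero => simp [repCat]
  | succ m ih =>
    show u₂ ++ ((v ++ (z' ++ u₂)) ++ repCat (v ++ (z' ++ u₂)) m) = _
    have e1 : u₂ ++ ((v ++ (z' ++ u₂)) ++ repCat (v ++ (z' ++ u₂)) m) =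
        (u₂ ++ (v ++ z')) ++ (u₂ ++ repCat (v ++ (z' ++ u₂)) m) := by simp
    rw [e1, ih]
    show _ = ((u₂ ++ (v ++ z')) ++ repCat (u₂ ++ (v ++ z')) m) ++ u₂
    simp

/-- every element of θ(u,v) equals ⟦u,v⟧ when (u,v) is pointed -/
theorem theta_sub {u v : List A} (hpt : IsPointed L u v) :
    ∀ q' ∈ theta L u v, q' = cls L u v hpt := by
  rintro q' ⟨p₀, hinit, p, hre, hsafe⟩
  obtain ⟨xi, yi, hi, hpeq, hsimi⟩ := hinit
  obtain ⟨x0, y0, h0, hp, hsim0⟩ := reach_sound u p₀ p hre xi yi hi [] hpeq hsimi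
  have hsimu : SimL L (x0 ++ y0) u := by
    rw [List.nil_append] at hsim0
    exact hsim0
  obtain ⟨x, y, h, hq, heqv⟩ := safe_sound v p q' hsafe x0 y0 h0 hp
  have hnb : (y0 ++ v) ∈ Kset L x0 := notbot_transfer heqv.2 (pointed_notbot h)
  have hsfl := hpt.2 x0 y0 hsimu hnb
  have E2 : EquivL L u v x0 (y0 ++ v) := by
    refine ⟨?_, hsfl⟩
    have := simL_symm (simL_append v hsimu)
    rw [List.append_assoc] at this
    exact this
  rw [hq]
  exact cls_eq.mpr (equivL_trans heqv (equivL_symm E2))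

/-- ⟦u,v⟧ belongs to θ(u,v) when (u,v) is pointed -/
theorem theta_mem (hfin : Set.Finite {S : Set (List A) | ∃ x y : List A, S = Sfl L x y})
    {u v : List A} (hpt : IsPointed L u v) :
    cls L u v hpt ∈ theta L u v := by
  have hEX := exist_pointed hfin
  have hCL := fun x y h c hm => closure_pointed hfin x y h c hm
  by_cases hv : v = []
  · subst hv
    obtain ⟨x', m, hpoint, hsim⟩ := descent hfin u [] (K_nil u)
    rw [List.append_nil] at hpoint
    have hnb : ¬ ApproxBot L x' (m ++ []) := by
      rw [List.append_nil]
      exact hpoint.1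
    have hsfl := hpt.2 x' m hsim hnb
    rw [List.append_nil] at hsfl
    have hequiv : EquivL L x' m u [] := by
      refine ⟨?_, hsfl.symm⟩
      rw [List.append_nil]
      exact hsim
    obtain ⟨p₀, hinit, hreach⟩ := reach_constr hEX u x' m hpoint hsim
    refine ⟨p₀, hinit, cls L x' m hpoint, hreach, ?_⟩
    show cls L x' m hpoint = cls L u [] hpt
    exact cls_eq.mpr hequiv
  · obtain ⟨z, hsimz, hmem⟩ := (notbot_iff.mp hpt.1).resolve_left hv
    have hsimw : SimL L (u ++ (v ++ z)) u := by
      rw [← List.append_assoc]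
      exact hsimz
    have hGood : ∀ n, (([] : List A) ++ repCat (v ++ z) n) ∈ Kset L u := by
      intro n
      rw [List.nil_append]
      exact K_pump hsimw hmem n
    obtain ⟨x', m, k, hpt', hsimm, hGood'⟩ := goodrec hfin (v ++ z) u [] hGood
    simp only [List.append_nil] at hpt' hGood'
    have hcat : SimL L (x' ++ (m ++ repCat (v ++ z) k)) u := by
      rw [← List.append_assoc]
      exact simL_trans (simL_append (repCat (v ++ z) k) hsimm) (simL_pump hsimw k)
    have hptY : IsPointed L x' (m ++ repCat (v ++ z) k) := hpt'
    obtain ⟨p₀, hinit, hreach⟩ := reach_constr hEX u x' (m ++ repCat (v ++ z) k) hptY hcat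
    have hW1 : ((m ++ repCat (v ++ z) k) ++ (v ++ z)) ∈ Kset L x' := by
      have h1 := hGood' 1
      rw [repCat_one] at h1
      exact h1
    have hpre : ∀ p : List A, p <+: v → ((m ++ repCat (v ++ z) k) ++ p) ∈ Kset L x' := by
      intro p hp
      refine K_prefix' ?_ hW1
      obtain ⟨r, rfl⟩ := hp
      exact ⟨r ++ z, by simp⟩
    obtain ⟨x'', y'', h'', hsr, heqv⟩ := safe_constr hCL v x' (m ++ repCat (v ++ z) k) hptY hpre
    have hnbY : ((m ++ repCat (v ++ z) k) ++ v) ∈ Kset L x' :=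
      K_prefix' ⟨z, by simp⟩ hW1
    have hsfl := hpt.2 x' (m ++ repCat (v ++ z) k) hcat hnbY
    have E2 : EquivL L u v x' ((m ++ repCat (v ++ z) k) ++ v) := by
      refine ⟨?_, hsfl⟩
      have := simL_symm (simL_append v hcat)
      rw [List.append_assoc] at this
      exact this
    have hfinal : cls L x'' y'' h'' = cls L u v hpt :=
      cls_eq.mpr (equivL_trans heqv (equivL_symm E2))
    refine ⟨p₀, hinit, cls L x' (m ++ repCat (v ++ z) k) hptY, hreach, ?_⟩
    rw [← hfinal]
    exact hsr

end Aux8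
section Aux9
variable {A : Type} [Nonempty A] {L : Set (ℕ → A)}

theorem theta_run (hfin : Set.Finite {S : Set (List A) | ∃ x y : List A, S = Sfl L x y})
    (v u xh Yh rest : List A)
    (hGood : ∀ n, (Yh ++ repCat (v ++ rest) n) ∈ Kset L xh)
    (hcat0 : SimL L (xh ++ Yh) u)
    (hloopu : SimL L (u ++ (v ++ rest)) u) :
    ∃ (x₀ m : List A) (k : ℕ) (xq yq : List A) (hq : IsPointed L xq yq),
      cls L xq yq hq ∈ theta L u v ∧
      IsPointed L x₀ ((m ++ Yh) ++ repCat (v ++ rest) k) ∧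
      SimL L (x₀ ++ m) xh ∧
      (∀ n, (((m ++ Yh) ++ repCat (v ++ rest) k) ++ repCat (v ++ rest) n) ∈ Kset L x₀) ∧
      EquivL L xq yq x₀ (((m ++ Yh) ++ repCat (v ++ rest) k) ++ v) := by
  have hEX := exist_pointed hfin
  have hCL := fun x y h c hm => closure_pointed hfin x y h c hm
  obtain ⟨x₀, m, k, hpt', hsimm, hGood'⟩ := goodrec hfin (v ++ rest) xh Yh hGood
  have hcat : SimL L (x₀ ++ ((m ++ Yh) ++ repCat (v ++ rest) k)) u := by
    rw [← List.append_assoc, ← List.append_assoc]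
    refine simL_trans (simL_append (repCat (v ++ rest) k) ?_) (simL_pump hloopu k)
    exact simL_trans (simL_append Yh hsimm) hcat0
  obtain ⟨p₀, hinit, hreach⟩ :=
    reach_constr hEX u x₀ ((m ++ Yh) ++ repCat (v ++ rest) k) hpt' hcat
  have hW1 : (((m ++ Yh) ++ repCat (v ++ rest) k) ++ (v ++ rest)) ∈ Kset L x₀ := by
    have h1 := hGood' 1
    rwa [repCat_one] at h1
  have hpre : ∀ p : List A, p <+: v →
      (((m ++ Yh) ++ repCat (v ++ rest) k) ++ p) ∈ Kset L x₀ := by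
    intro p hp
    refine K_prefix' ?_ hW1
    obtain ⟨r, rfl⟩ := hp
    exact ⟨r ++ rest, by simp⟩
  obtain ⟨xq, yq, hq, hsr, heqv⟩ :=
    safe_constr hCL v x₀ ((m ++ Yh) ++ repCat (v ++ rest) k) hpt' hpre
  exact ⟨x₀, m, k, xq, yq, hq,
    ⟨p₀, hinit, cls L x₀ ((m ++ Yh) ++ repCat (v ++ rest) k) hpt', hreach, hsr⟩,
    hpt', hsimm, hGood', heqv⟩

theorem theta_single_pointed
    (hfin : Set.Finite {S : Set (List A) | ∃ x y : List A, S = Sfl L x y})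
    {u v : List A} (q : CanonState L) (hθ : theta L u v = {q}) : IsPointed L u v := by
  have hqθ : q ∈ theta L u v := by rw [hθ]; exact rfl
  obtain ⟨p₀, hinit, p, hre, hsafe⟩ := hqθ
  obtain ⟨xi, yi, hi, hpeq, hsimi⟩ := hinit
  obtain ⟨x0, y0, h0, hp, hsim0⟩ := reach_sound u p₀ p hre xi yi hi [] hpeq hsimi
  have hsimu : SimL L (x0 ++ y0) u := by rw [List.nil_append] at hsim0; exact hsim0
  obtain ⟨x, y, h, hq, heqv⟩ := safe_sound v p q hsafe x0 y0 h0 hp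
  have hnb0 : (y0 ++ v) ∈ Kset L x0 := notbot_transfer heqv.2 (pointed_notbot h)
  have hKuv : v ∈ Kset L u := by
    have h1 : v ∈ Kset L (x0 ++ y0) := K_move hnb0
    rwa [K_class hsimu] at h1
  refine ⟨hKuv, ?_⟩
  intro u₁ u₂ hsim12 hnb12
  refine le_antisymm ?_ (sfl_move hsim12)
  intro t ht
  rw [mem_sfl] at ht ⊢
  by_cases hvt : v ++ t = []
  · rcases List.append_eq_nil_iff.mp hvt with ⟨hv, ht'⟩
    subst ht'
    rw [List.append_nil]
    exact hnb12
  · obtain ⟨z, h1, h2⟩ := (notbot_iff.mp ht).resolve_left hvt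
    -- RUN A
    have hloopA : SimL L (u ++ (v ++ (t ++ z))) u := by
      have e : u ++ (v ++ (t ++ z)) = u ++ (v ++ t) ++ z := by simp
      rw [e]; exact h1
    have hGoodA : ∀ n, (([] : List A) ++ repCat (v ++ (t ++ z)) n) ∈ Kset L u := by
      intro n
      rw [List.nil_append]
      refine K_pump hloopA ?_ n
      have e : v ++ (t ++ z) = (v ++ t) ++ z := by simp
      rw [e]; exact h2
    obtain ⟨a', mA, kA, xA, yA, hA, hθA, hptA, hsimA, hGoodA', heqvA⟩ :=
      theta_run hfin v u u [] (t ++ z) hGoodA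
        (by rw [List.append_nil]; exact simL_refl u) hloopA
    have htA : t ∈ Sfl L xA yA := by
      rw [heqvA.2, mem_sfl]
      have hh := hGoodA' 1
      rw [repCat_one] at hh
      exact K_prefix' ⟨z, by simp⟩ hh
    have hqA : cls L xA yA hA = q := by rw [hθ] at hθA; exact hθA
    -- RUN B
    by_cases hvz : u₂ ++ v = []
    · rcases List.append_eq_nil_iff.mp hvz with ⟨hu2, hv⟩
      subst hu2
      subst hv
      have h3 : t ∈ Kset L u := by rw [List.nil_append] at ht; exact ht
      have h4 : SimL L u₁ u := by
        have := hsim12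
        rwa [List.append_nil] at this
      rw [show (([] : List A) ++ []) ++ t = t by simp]
      rwa [← K_class h4] at h3
    · obtain ⟨z', h1', h2'⟩ := (notbot_iff.mp hnb12).resolve_left hvz
      have hloopB1 : SimL L (u₁ ++ (u₂ ++ (v ++ z'))) u₁ := by
        have e : u₁ ++ (u₂ ++ (v ++ z')) = u₁ ++ (u₂ ++ v) ++ z' := by simp
        rw [e]; exact h1'
      have hGoodB : ∀ n, (u₂ ++ repCat (v ++ (z' ++ u₂)) n) ∈ Kset L u₁ := by
        intro n
        rw [Kset, Set.mem_setOf_eq, notbot_iff]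
        right
        refine ⟨v ++ z', ?_, ?_⟩
        · have e : u₁ ++ (u₂ ++ repCat (v ++ (z' ++ u₂)) n) ++ (v ++ z') =
              u₁ ++ repCat (u₂ ++ (v ++ z')) (n + 1) := by
            rw [List.append_assoc, LI1]
          rw [e]
          exact simL_pump hloopB1 (n + 1)
        · have e : (u₂ ++ repCat (v ++ (z' ++ u₂)) n) ++ (v ++ z') =
              repCat (u₂ ++ (v ++ z')) (n + 1) := LI1 _ _ _ _
          rw [e]
          show appW u₁ (iterW (repCat (u₂ ++ (v ++ z')) (n + 1))) ∈ L
          rw [iterW_repCat]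
          have e2 : u₂ ++ (v ++ z') = (u₂ ++ v) ++ z' := by simp
          rw [e2]
          exact h2'
      have hloopBu : SimL L (u ++ (v ++ (z' ++ u₂))) u := by
        have t1 : SimL L (u ++ (v ++ (z' ++ u₂))) ((u₁ ++ u₂) ++ (v ++ (z' ++ u₂))) :=
          simL_append _ (simL_symm hsim12)
        have e : (u₁ ++ u₂) ++ (v ++ (z' ++ u₂)) = (u₁ ++ (u₂ ++ (v ++ z'))) ++ u₂ := by simp
        rw [e] at t1
        have t2 : SimL L ((u₁ ++ (u₂ ++ (v ++ z'))) ++ u₂) (u₁ ++ u₂) :=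
          simL_append u₂ hloopB1
        exact simL_trans t1 (simL_trans t2 hsim12)
      obtain ⟨x₀, mB, kB, xB, yB, hB, hθB, hptB, hsimB, hGoodB', heqvB⟩ :=
        theta_run hfin v u u₁ u₂ (z' ++ u₂) hGoodB hsim12 hloopBu
      have hqB : cls L xB yB hB = q := by rw [hθ] at hθB; exact hθB
      have hE : EquivL L xA yA xB yB := cls_eq.mp (hqA.trans hqB.symm)
      have htB : t ∈ Sfl L x₀ (((mB ++ u₂) ++ repCat (v ++ (z' ++ u₂)) kB) ++ v) := by
        rw [← heqvB.2, ← hE.2]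
        exact htA
      rw [mem_sfl] at htB
      have eLI2 : u₂ ++ repCat (v ++ (z' ++ u₂)) kB = repCat (u₂ ++ (v ++ z')) kB ++ u₂ :=
        LI2 _ _ _ _
      have e3 : ((((mB ++ u₂) ++ repCat (v ++ (z' ++ u₂)) kB) ++ v) ++ t) =
          ((mB ++ repCat (u₂ ++ (v ++ z')) kB) ++ ((u₂ ++ v) ++ t)) := by
        rw [show (mB ++ u₂) ++ repCat (v ++ (z' ++ u₂)) kB =
          mB ++ (u₂ ++ repCat (v ++ (z' ++ u₂)) kB) from List.append_assoc _ _ _, eLI2]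
        simp
      rw [e3] at htB
      have hmove := K_move htB
      have hclass : SimL L (x₀ ++ (mB ++ repCat (u₂ ++ (v ++ z')) kB)) u₁ := by
        rw [← List.append_assoc]
        exact simL_trans (simL_append _ hsimB) (simL_pump hloopB1 kB)
      rwa [K_class hclass] at hmove

end Aux9
/-- `θ(u,v)` is a singleton iff `(u,v)` is pointed. -/
theorem stmt16 {A : Type} [Nonempty A] [Fintype A] (L : Set (ℕ → A))
    (hrec : DCWRecognizable L) (u v : List A) :
    (∃ q : CanonState L, theta L u v = {q}) ↔ IsPointed L u v := by
  have hfin := sfl_finite hrec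
  constructor
  · rintro ⟨q, hθ⟩
    exact theta_single_pointed hfin q hθ
  · intro hpt
    refine ⟨cls L u v hpt, ?_⟩
    exact Set.eq_singleton_iff_unique_mem.mpr
      ⟨theta_mem hfin hpt, fun q' hq' => theta_sub hpt q' hq'⟩
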